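/- Let m0+, m1+, m2+ be nonnegative integers and a > 0. Then ∫₀¹∫₀¹ 2^{m1+} · γ^{m1+}(1-γ)^{m2+}/(1+γ)^{m1+ + m2+} · θ^{m1+ + m2+}(1-θ)^{m0+} · [2^{1/2}/B(1/2,1/2) · γ^{-1/2}(1-γ)^{-1/2}/(1+γ)] · [θ^{a-1}(1-θ)^{-1/2}/B(a,1/2)] dγ dθ = [B(m1+ + 1/2, m2+ + 1/2)/B(1/2,1/2)] · [B(m1+ + m2+ + a, m0+ + 1/2)/B(a,1/2)]. (This computes the marginal predictive distribution of the data under the null hypothesis H0: λ0 = λ1 for Dallal's model, up to the multinomial coefficients.) -/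

import Mathlib

open MeasureTheory

/-- The Beta function `B(a,b) = Γ(a)Γ(b)/Γ(a+b)`. -/
noncomputable def betaFn (a b : ℝ) : ℝ := Real.Gamma a * Real.Gamma b / Real.Gamma (a + b)

lemma betaFn_pos {a b : ℝ} (ha : 0 < a) (hb : 0 < b) : 0 < betaFn a b :=
  div_pos (mul_pos (Real.Gamma_pos_of_pos ha) (Real.Gamma_pos_of_pos hb))
    (Real.Gamma_pos_of_pos (by linarith))

lemma beta_integral_Ioo {a b : ℝ} (ha : 0 < a) (hb : 0 < b) :
    ∫ x in Set.Ioo (0:ℝ) 1, x ^ (a-1) * (1-x) ^ (b-1) = betaFn a b := by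
  have ha' : 0 < (a:ℂ).re := by simpa using ha
  have hb' : 0 < (b:ℂ).re := by simpa using hb
  have key := Complex.Gamma_mul_Gamma_eq_betaIntegral ha' hb'
  have h1 : Complex.betaIntegral a b
      = ((∫ x in Set.Ioo (0:ℝ) 1, x ^ (a-1) * (1-x) ^ (b-1) : ℝ) : ℂ) := by
    calc Complex.betaIntegral a b
        = ∫ x in Set.Ioc (0:ℝ) 1, ((x ^ (a-1) * (1-x) ^ (b-1) : ℝ) : ℂ) := by
          rw [Complex.betaIntegral, intervalIntegral.integral_of_le zero_le_one]
          refine setIntegral_congr_fun measurableSet_Ioc (fun x hx => ?_)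
          obtain ⟨hx0, hx1⟩ := hx
          push_cast
          rw [Complex.ofReal_cpow hx0.le, Complex.ofReal_cpow (by linarith)]
          push_cast
          ring
      _ = ((∫ x in Set.Ioc (0:ℝ) 1, x ^ (a-1) * (1-x) ^ (b-1) : ℝ) : ℂ) := integral_ofReal
      _ = _ := by rw [MeasureTheory.integral_Ioc_eq_integral_Ioo]
  rw [h1, ← Complex.ofReal_add, Complex.Gamma_ofReal, Complex.Gamma_ofReal,
    Complex.Gamma_ofReal, ← Complex.ofReal_mul, ← Complex.ofReal_mul] at key
  have := Complex.ofReal_injective key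
  have hG : Real.Gamma (a+b) ≠ 0 := (Real.Gamma_pos_of_pos (by linarith)).ne'
  unfold betaFn
  field_simp
  linarith [this]

lemma gamma_sub_integral (a b : ℝ) :
    ∫ x in Set.Ioo (0:ℝ) 1, x ^ (a-1) * (1-x) ^ (b-1)
      = ∫ x in Set.Ioo (0:ℝ) 1,
          (2:ℝ) ^ a * (x ^ (a-1) * (1-x) ^ (b-1) * (1+x) ^ (-(a+b))) := by
  have himg : (fun x : ℝ => 2*x/(1+x)) '' Set.Ioo 0 1 = Set.Ioo (0:ℝ) 1 := by
    ext u
    constructor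
    · rintro ⟨x, ⟨hx0, hx1⟩, rfl⟩
      constructor
      · exact div_pos (by linarith) (by linarith)
      · rw [div_lt_one (by linarith)]; linarith
    · rintro ⟨hu0, hu1⟩
      refine ⟨u/(2-u), ⟨div_pos hu0 (by linarith), ?_⟩, ?_⟩
      · rw [div_lt_one (by linarith)]; linarith
      · have h2u : (2:ℝ) - u ≠ 0 := by linarith
        field_simp
        ring
  have hinj : Set.InjOn (fun x : ℝ => 2*x/(1+x)) (Set.Ioo 0 1) := by
    intro x hx y hy h
    simp only at h
    have hx1 : (1:ℝ) + x ≠ 0 := by have := hx.1; positivity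
    have hy1 : (1:ℝ) + y ≠ 0 := by have := hy.1; positivity
    field_simp at h
    nlinarith
  have hderiv : ∀ x ∈ Set.Ioo (0:ℝ) 1,
      HasDerivWithinAt (fun x : ℝ => 2*x/(1+x)) (2/(1+x)^2) (Set.Ioo 0 1) x := by
    intro x hx
    have h1x : (0:ℝ) < 1 + x := by have := hx.1; linarith
    have h1 : HasDerivAt (fun x : ℝ => 2*x) 2 x := by
      simpa using (hasDerivAt_id x).const_mul (2:ℝ)
    have h2 : HasDerivAt (fun x : ℝ => 1+x) 1 x := by
      simpa using (hasDerivAt_id x).const_add (1:ℝ)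
    have := h1.div h2 h1x.ne'
    have heq : (2*(1+x) - 2*x*1)/(1+x)^2 = 2/(1+x)^2 := by field_simp; ring
    rw [heq] at this
    exact this.hasDerivWithinAt
  have := MeasureTheory.integral_image_eq_integral_abs_deriv_smul measurableSet_Ioo hderiv hinj
    (fun x : ℝ => x ^ (a-1) * (1-x) ^ (b-1))
  rw [himg] at this
  rw [this]
  refine setIntegral_congr_fun measurableSet_Ioo (fun x hx => ?_)
  obtain ⟨hx0, hx1⟩ := hx
  have h1x : (0:ℝ) < 1 + x := by linarith
  have h1mx : (0:ℝ) < 1 - x := by linarith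
  have habs : |2/(1+x)^2| = 2/(1+x)^2 := abs_of_pos (by positivity)
  have e1 : (1:ℝ) - 2*x/(1+x) = (1-x)/(1+x) := by field_simp; ring
  rw [smul_eq_mul, habs, e1]
  rw [Real.div_rpow (by linarith) h1x.le, Real.div_rpow h1mx.le h1x.le,
    Real.mul_rpow (by norm_num) hx0.le]
  have e2 : ((1:ℝ)+x) ^ (-(a+b)) = (((1+x) ^ (a-1)) * ((1+x) ^ (b-1)) * ((1+x)^(2:ℕ)))⁻¹ := by
    rw [← Real.rpow_natCast (1+x) 2, ← Real.rpow_add h1x, ← Real.rpow_add h1x,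
      ← Real.rpow_neg h1x.le]
    norm_num
    ring_nf
  have e3 : (2:ℝ) ^ a = 2 * 2 ^ (a-1) := by
    rw [show a = (a-1) + 1 by ring, Real.rpow_add (by norm_num)]
    rw [Real.rpow_one]; ring_nf
  rw [e2, e3]
  have n1 : ((1:ℝ)+x) ^ (a-1) ≠ 0 := (Real.rpow_pos_of_pos h1x _).ne'
  have n2 : ((1:ℝ)+x) ^ (b-1) ≠ 0 := (Real.rpow_pos_of_pos h1x _).ne'
  have n3 : ((1:ℝ)+x) ^ (2:ℕ) ≠ 0 := by positivity
  field_simp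

lemma theta_integral (m m0 : ℕ) {a : ℝ} (ha : 0 < a) :
    ∫ θ in Set.Ioo (0:ℝ) 1,
        θ ^ m * (1-θ) ^ m0 * (θ ^ (a-1) * (1-θ) ^ (-(1:ℝ)/2) / betaFn a (1/2))
      = betaFn ((m:ℝ) + a) ((m0:ℝ) + 1/2) / betaFn a (1/2) := by
  have hA : (0:ℝ) < (m:ℝ) + a := by positivity
  have hB : (0:ℝ) < (m0:ℝ) + 1/2 := by positivity
  rw [← beta_integral_Ioo hA hB, ← integral_div]
  refine setIntegral_congr_fun measurableSet_Ioo (fun θ hθ => ?_)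
  obtain ⟨h0, h1⟩ := hθ
  have h1mθ : (0:ℝ) < 1 - θ := by linarith
  have t1 : θ ^ ((m:ℝ)) * θ ^ (a-1) = θ ^ (((m:ℝ)+a)-1) := by
    rw [← Real.rpow_add h0]; congr 1; ring
  have t2 : (1-θ) ^ ((m0:ℝ)) * (1-θ) ^ (-(1:ℝ)/2) = (1-θ) ^ (((m0:ℝ)+1/2)-1) := by
    rw [← Real.rpow_add h1mθ]; congr 1; ring
  rw [← Real.rpow_natCast θ m, ← Real.rpow_natCast (1-θ) m0]
  rw [show θ ^ ((m:ℝ)) * (1-θ) ^ ((m0:ℝ)) * (θ ^ (a-1) * (1-θ) ^ (-(1:ℝ)/2) / betaFn a (1/2))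
      = (θ ^ ((m:ℝ)) * θ ^ (a-1)) * ((1-θ) ^ ((m0:ℝ)) * (1-θ) ^ (-(1:ℝ)/2)) / betaFn a (1/2)
    by ring, t1, t2]

lemma gamma_integral (m1 m2 : ℕ) :
    ∫ γ in Set.Ioo (0:ℝ) 1,
        (2:ℝ) ^ m1 * (γ ^ m1 * (1-γ) ^ m2 / (1+γ) ^ (m1+m2)) *
          ((2:ℝ) ^ ((1:ℝ)/2) / betaFn (1/2) (1/2) *
            (γ ^ (-(1:ℝ)/2) * (1-γ) ^ (-(1:ℝ)/2) / (1+γ)))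
      = betaFn ((m1:ℝ) + 1/2) ((m2:ℝ) + 1/2) / betaFn (1/2) (1/2) := by
  set A := (m1:ℝ) + 1/2 with hA
  set B := (m2:ℝ) + 1/2 with hB
  have hApos : (0:ℝ) < A := by positivity
  have hBpos : (0:ℝ) < B := by positivity
  have hB0 : (0:ℝ) < betaFn (1/2) (1/2) := betaFn_pos (by norm_num) (by norm_num)
  have key : betaFn A B
      = ∫ x in Set.Ioo (0:ℝ) 1, (2:ℝ) ^ A * (x ^ (A-1) * (1-x) ^ (B-1) * (1+x) ^ (-(A+B))) := by
    rw [← gamma_sub_integral A B, beta_integral_Ioo hApos hBpos]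
  rw [eq_div_iff hB0.ne', key, ← integral_mul_const]
  refine setIntegral_congr_fun measurableSet_Ioo (fun x hx => ?_)
  obtain ⟨hx0, hx1⟩ := hx
  have h1x : (0:ℝ) < 1 + x := by linarith
  have h1mx : (0:ℝ) < 1 - x := by linarith
  have t0 : (2:ℝ) ^ m1 * (2:ℝ) ^ ((1:ℝ)/2) = (2:ℝ) ^ A := by
    rw [← Real.rpow_natCast 2 m1, ← Real.rpow_add (by norm_num)]
  have t1 : x ^ m1 * x ^ (-(1:ℝ)/2) = x ^ (A-1) := by
    rw [← Real.rpow_natCast x m1, ← Real.rpow_add hx0]; congr 1; rw [hA]; ring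
  have t2 : (1-x) ^ m2 * (1-x) ^ (-(1:ℝ)/2) = (1-x) ^ (B-1) := by
    rw [← Real.rpow_natCast (1-x) m2, ← Real.rpow_add h1mx]; congr 1; rw [hB]; ring
  have t3 : ((1:ℝ)+x) ^ (-(A+B)) = ((1+x) ^ (m1+m2) * (1+x))⁻¹ := by
    have e : ((m1+m2:ℕ):ℝ) + 1 = A + B := by push_cast [hA, hB]; ring
    rw [Real.rpow_neg h1x.le]
    congr 1
    rw [← e, Real.rpow_add h1x, Real.rpow_natCast, Real.rpow_one]
  rw [← t0, ← t1, ← t2, t3]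
  have n1 : ((1:ℝ)+x) ^ (m1+m2) ≠ 0 := by positivity
  have nB : betaFn (1/2) (1/2) ≠ 0 := hB0.ne'
  field_simp

/-- The marginal predictive distribution of the data under the null hypothesis
`H₀ : λ0 = λ1` for Dallal's model (up to multinomial coefficients): integrating
the likelihood in the `(γ,θ)` parameterization against the prior
`(2^{1/2}/B(1/2,1/2))·γ^{-1/2}(1-γ)^{-1/2}/(1+γ) · θ^{a-1}(1-θ)^{-1/2}/B(a,1/2)`
over `(0,1)²` yields
`[B(m1+ + 1/2, m2+ + 1/2)/B(1/2,1/2)]·[B(m1+ + m2+ + a, m0+ + 1/2)/B(a,1/2)]`. -/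
theorem dallal_marginal_predictive_H0
    (m0p m1p m2p : ℕ) (a : ℝ) (ha : 0 < a) :
    ∫ γ in Set.Ioo (0 : ℝ) 1, ∫ θ in Set.Ioo (0 : ℝ) 1,
        (2 : ℝ) ^ m1p * (γ ^ m1p * (1 - γ) ^ m2p / (1 + γ) ^ (m1p + m2p)) *
          (θ ^ (m1p + m2p) * (1 - θ) ^ m0p) *
        ((2 : ℝ) ^ ((1 : ℝ) / 2) / betaFn (1 / 2) (1 / 2) *
            (γ ^ (-(1 : ℝ) / 2) * (1 - γ) ^ (-(1 : ℝ) / 2) / (1 + γ)) *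
          (θ ^ (a - 1) * (1 - θ) ^ (-(1 : ℝ) / 2) / betaFn a (1 / 2))) =
      betaFn ((m1p : ℝ) + 1 / 2) ((m2p : ℝ) + 1 / 2) / betaFn (1 / 2) (1 / 2) *
        (betaFn ((m1p : ℝ) + m2p + a) ((m0p : ℝ) + 1 / 2) / betaFn a (1 / 2)) := by
  have step1 : ∀ γ : ℝ,
      (∫ θ in Set.Ioo (0 : ℝ) 1,
        (2 : ℝ) ^ m1p * (γ ^ m1p * (1 - γ) ^ m2p / (1 + γ) ^ (m1p + m2p)) *
          (θ ^ (m1p + m2p) * (1 - θ) ^ m0p) *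
        ((2 : ℝ) ^ ((1 : ℝ) / 2) / betaFn (1 / 2) (1 / 2) *
            (γ ^ (-(1 : ℝ) / 2) * (1 - γ) ^ (-(1 : ℝ) / 2) / (1 + γ)) *
          (θ ^ (a - 1) * (1 - θ) ^ (-(1 : ℝ) / 2) / betaFn a (1 / 2))))
      = ((2 : ℝ) ^ m1p * (γ ^ m1p * (1 - γ) ^ m2p / (1 + γ) ^ (m1p + m2p)) *
          ((2 : ℝ) ^ ((1 : ℝ) / 2) / betaFn (1 / 2) (1 / 2) *
            (γ ^ (-(1 : ℝ) / 2) * (1 - γ) ^ (-(1 : ℝ) / 2) / (1 + γ)))) *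
          (betaFn (((m1p+m2p : ℕ):ℝ) + a) ((m0p:ℝ) + 1/2) / betaFn a (1/2)) := by
    intro γ
    rw [← theta_integral (m1p+m2p) m0p ha, ← MeasureTheory.integral_const_mul]
    refine setIntegral_congr_fun measurableSet_Ioo (fun θ _ => ?_)
    ring
  simp_rw [step1]
  rw [MeasureTheory.integral_mul_const, gamma_integral m1p m2p]
  push_cast
  ring
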